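/- Let (σ_k)_{k ∈ Fin n} be a maximal CDP family and (A^k)_{k ∈ Fin n} matrices in Matrix (Fin n) (Fin n) ℂ. Then (1) ρ[𝒜,Σ] is Hermitian if and only if every A^k is Hermitian, and (2) ρ[𝒜,Σ] is positive semidefinite if and only if every A^k is positive semidefinite. -/

import Mathlib

open ComplexOrder

/-- The CDP matrix of `A` and a permutation `σ`. -/
def cdpMatrix {n : ℕ} (A : Matrix (Fin n) (Fin n) ℂ) (σ : Equiv.Perm (Fin n)) :
    Matrix (Fin n × Fin n) (Fin n × Fin n) ℂ :=
  Matrix.of fun x y => if x.2 = σ x.1 ∧ y.2 = σ y.1 then A x.1 y.1 else 0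

open Matrix in
lemma blockDiagonal_isHermitian_iff {n m : Type*} [Fintype m] [DecidableEq m]
    (A : m → Matrix n n ℂ) :
    (Matrix.blockDiagonal A).IsHermitian ↔ ∀ k, (A k).IsHermitian := by
  constructor
  · intro h k
    ext i j
    have := congrFun (congrFun h (i, k)) (j, k)
    simpa [Matrix.conjTranspose_apply, Matrix.blockDiagonal_apply] using this
  · intro h
    unfold Matrix.IsHermitian
    rw [Matrix.blockDiagonal_conjTranspose]
    exact congrArg _ (funext fun k => h k)

open Matrix in
lemma quad_blockDiagonal {n m : Type*} [Fintype n] [Fintype m] [DecidableEq m]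
    (A : m → Matrix n n ℂ) (y : n × m → ℂ) :
    star y ⬝ᵥ (Matrix.blockDiagonal A *ᵥ y) =
      ∑ k, star (fun i => y (i, k)) ⬝ᵥ (A k *ᵥ fun i => y (i, k)) := by
  simp only [dotProduct, Matrix.mulVec, Fintype.sum_prod_type,
    Matrix.blockDiagonal_apply, Pi.star_apply]
  rw [Finset.sum_comm]
  refine Finset.sum_congr rfl fun k _ => Finset.sum_congr rfl fun i _ => ?_
  simp only [Finset.mul_sum]
  rw [Finset.sum_comm]
  simp [Finset.mul_sum, mul_ite, ite_mul]

open Matrix in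
lemma blockDiagonal_posSemidef_iff {n m : Type*} [Fintype n] [Fintype m] [DecidableEq m]
    (A : m → Matrix n n ℂ) :
    (Matrix.blockDiagonal A).PosSemidef ↔ ∀ k, (A k).PosSemidef := by
  constructor
  · intro h k
    refine .of_dotProduct_mulVec_nonneg ((blockDiagonal_isHermitian_iff A).mp h.1 k) fun x => ?_
    have := h.dotProduct_mulVec_nonneg (fun p => if p.2 = k then x p.1 else 0)
    rw [quad_blockDiagonal] at this
    convert this using 2
    rw [Finset.sum_eq_single k]
    · simp
    · intro k' _ hk'
      simp [hk', dotProduct]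
    · simp
  · intro h
    refine .of_dotProduct_mulVec_nonneg ((blockDiagonal_isHermitian_iff A).mpr (fun k => (h k).1)) fun y => ?_
    rw [quad_blockDiagonal]
    exact Finset.sum_nonneg fun k _ => (h k).dotProduct_mulVec_nonneg _

/-- `ρ[𝒜,Σ]` is Hermitian iff every `A^k` is Hermitian, and positive semidefinite iff
every `A^k` is positive semidefinite. -/
theorem cdpMatrix_hermitian_posSemidef {n : ℕ} [NeZero n] (σ : Fin n → Equiv.Perm (Fin n))
    (hcdp : ∀ i j, i ≠ j → ∀ k, σ i k ≠ σ j k)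
    (hnorm : ∀ i, σ i 0 = i)
    (A : Fin n → Matrix (Fin n) (Fin n) ℂ) :
    ((∑ k, cdpMatrix (A k) (σ k)).IsHermitian ↔ ∀ k, (A k).IsHermitian) ∧
    ((∑ k, cdpMatrix (A k) (σ k)).PosSemidef ↔ ∀ k, (A k).PosSemidef) := by
  have hinj : ∀ i : Fin n, Function.Injective (fun k => σ k i) := by
    intro i k l h
    by_contra hne
    exact hcdp k l hne i h
  let f : Fin n → Fin n ≃ Fin n := fun i =>
    Equiv.ofBijective _ ((Finite.injective_iff_bijective).mp (hinj i))
  have hf : ∀ i k, f i k = σ k i := fun i k => rfl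
  let e : (Fin n × Fin n) ≃ (Fin n × Fin n) :=
    { toFun := fun x => (x.1, (f x.1).symm x.2)
      invFun := fun x => (x.1, f x.1 x.2)
      left_inv := fun x => by simp
      right_inv := fun x => by simp }
  have key : (∑ k, cdpMatrix (A k) (σ k)) = (Matrix.blockDiagonal A).submatrix e e := by
    ext ⟨i, p⟩ ⟨j, q⟩
    simp only [Matrix.sum_apply, cdpMatrix, Matrix.of_apply]
    have he : (Matrix.blockDiagonal A).submatrix e e (i, p) (j, q) =
        if (f i).symm p = (f j).symm q then A ((f i).symm p) i j else 0 := by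
      simp only [Matrix.submatrix_apply]
      have h1 : e (i, p) = (i, (f i).symm p) := rfl
      have h2 : e (j, q) = (j, (f j).symm q) := rfl
      rw [h1, h2, Matrix.blockDiagonal_apply]
    rw [he, Finset.sum_eq_single ((f i).symm p)]
    · have hp : p = σ ((f i).symm p) i := ((f i).apply_symm_apply p).symm
      by_cases hq : q = σ ((f i).symm p) j
      · have h2 : (f j).symm q = (f i).symm p := (f j).symm_apply_eq.mpr hq
        rw [if_pos ⟨hp, hq⟩, if_pos h2.symm]
      · have h2 : (f j).symm q ≠ (f i).symm p := fun hcon =>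
          hq ((f j).symm_apply_eq.mp hcon)
        rw [if_neg (fun h => hq h.2), if_neg (fun h => h2 h.symm)]
    · intro k _ hk
      have hne : p ≠ σ k i := fun hcon => hk (by rw [hcon]; exact ((f i).symm_apply_apply k).symm)
      rw [if_neg (fun h => hne h.1)]
    · simp
  rw [key]
  exact ⟨(Matrix.isHermitian_submatrix_equiv e).trans (blockDiagonal_isHermitian_iff A),
    (Matrix.posSemidef_submatrix_equiv e).trans (blockDiagonal_posSemidef_iff A)⟩
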